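/- Fix n ≥ 4 and q ≥ 2n, and let v_1, ..., v_ℓ be vectors in the nonnegative orthant of ℝⁿ with ‖v_j‖₂ = 1/√n for all j and v_i·v_j ≤ 1/n − 1/q for all i ≠ j. Define consumer valuations ṽ_j = 2^j · v_j and lotteries λ_j with probability vector v_j and price (1/q)·2^j. Then for every j, the utility of consumer ṽ_j from lottery λ_j equals (1/n − 1/q)·2^j, and her utility from any other lottery λ_i (i ≠ j) is at most (1/n − 1/q)·2^j minus its price, hence at most (1/n − 1/q)·2^j; in particular λ_j is a utility-maximizing choice for consumer ṽ_j. -/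

import Mathlib

/-- in the buy-one lower bound construction, consumer `ṽ_j = 2^j v_j`
gets utility exactly `(1/n - 1/q)·2^j` from lottery `λ_j = (v_j, 2^j/q)`, utility
at most `(1/n - 1/q)·2^j` minus the price from any other lottery `λ_i`, and hence
`λ_j` is utility-maximizing for her. -/
theorem stmt_5 (n : ℕ) (hn : 4 ≤ n) (q : ℝ) (hq : 2 * n ≤ q)
    (ℓ : ℕ) (v : ℕ → EuclideanSpace ℝ (Fin n))
    (hpos : ∀ j, 1 ≤ j → j ≤ ℓ → ∀ i, 0 ≤ v j i)
    (hnorm : ∀ j, 1 ≤ j → j ≤ ℓ → ‖v j‖ = 1 / Real.sqrt n)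
    (hdot : ∀ i j, 1 ≤ i → i ≤ ℓ → 1 ≤ j → j ≤ ℓ → i ≠ j →
      (inner ℝ (v i) (v j) : ℝ) ≤ 1 / n - 1 / q)
    (j : ℕ) (hj1 : 1 ≤ j) (hjl : j ≤ ℓ) :
    (inner ℝ ((2 ^ j : ℝ) • v j) (v j) : ℝ) - (1 / q) * 2 ^ j
        = (1 / n - 1 / q) * 2 ^ j ∧
    (∀ i, 1 ≤ i → i ≤ ℓ → i ≠ j →
      (inner ℝ ((2 ^ j : ℝ) • v j) (v i) : ℝ) - (1 / q) * 2 ^ i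
        ≤ (1 / n - 1 / q) * 2 ^ j - (1 / q) * 2 ^ i) ∧
    (∀ i, 1 ≤ i → i ≤ ℓ →
      (inner ℝ ((2 ^ j : ℝ) • v j) (v i) : ℝ) - (1 / q) * 2 ^ i
        ≤ (inner ℝ ((2 ^ j : ℝ) • v j) (v j) : ℝ) - (1 / q) * 2 ^ j) := by
  have hn0 : (0 : ℝ) < n := by positivity
  have hq0 : (0 : ℝ) < q := lt_of_lt_of_le (by positivity) hq
  have hself : (inner ℝ (v j) (v j) : ℝ) = 1 / n := by
    rw [real_inner_self_eq_norm_sq, hnorm j hj1 hjl]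
    rw [div_pow, one_pow, Real.sq_sqrt (le_of_lt hn0)]
  have h1 : (inner ℝ ((2 ^ j : ℝ) • v j) (v j) : ℝ) - (1 / q) * 2 ^ j
      = (1 / n - 1 / q) * 2 ^ j := by
    rw [real_inner_smul_left, hself]; ring
  refine ⟨h1, ?_, ?_⟩
  · intro i hi1 hil hij
    have := hdot j i hj1 hjl hi1 hil (Ne.symm hij)
    rw [real_inner_smul_left]
    have hp : (0:ℝ) < 2 ^ j := by positivity
    nlinarith
  · intro i hi1 hil
    by_cases hij : i = j
    · subst hij; exact le_rfl
    · have := hdot j i hj1 hjl hi1 hil (Ne.symm hij)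
      rw [real_inner_smul_left, real_inner_smul_left, hself]
      have hp : (0:ℝ) < 2 ^ j := by positivity
      have hpi : (0:ℝ) < 2 ^ i := by positivity
      have h2 : (2:ℝ) ^ j * (inner ℝ (v j) (v i) : ℝ) ≤ 2 ^ j * (1 / n - 1 / q) :=
        mul_le_mul_of_nonneg_left this hp.le
      have h3 : (0:ℝ) < 1 / q * 2 ^ i := by positivity
      nlinarith [h2, h3]
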